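/- Let F* be a nonempty face of K* := K°. The following are equivalent: (i) F* is an (M(R*×{0}))-maximal face of K*, i.e., every w ∈ F* satisfies w − εc* ∉ K* for all ε > 0 (note M(R*×{0}) = cone{−c*}); (ii) there exists y ∈ Γ⁻¹(F*) such that (c*)ᵀy < 0, i.e., y_{q+1} > 0. -/

import Mathlib

open Matrix Set Pointwise

noncomputable section

/-- `cone B = {l • x : l ≥ 0, x ∈ conv B}` -/
def coneOf {E : Type*} [AddCommGroup E] [Module ℝ E] (B : Set E) : Set E :=
  {y | ∃ l : ℝ, 0 ≤ l ∧ ∃ x ∈ convexHull ℝ B, y = l • x}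

/-- `F` is a face of the convex set `B`. -/
def IsFaceOf {E : Type*} [AddCommGroup E] [Module ℝ E] (F B : Set E) : Prop :=
  Convex ℝ F ∧ F ⊆ B ∧
    ∀ y ∈ B, ∀ z ∈ B, ∀ l : ℝ, 0 < l → l < 1 → l • y + (1 - l) • z ∈ F → y ∈ F ∧ z ∈ F

/-- recession cone `0⁺B` of a convex set. -/
def recCone {E : Type*} [AddCommGroup E] [Module ℝ E] (B : Set E) : Set E :=
  {d | ∀ x ∈ B, ∀ t : ℝ, 0 ≤ t → x + t • d ∈ B}

/-- lineality space `L(B) = 0⁺B ∩ (−0⁺B)`. -/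
def linealOf {E : Type*} [AddCommGroup E] [Module ℝ E] (B : Set E) : Set E :=
  recCone B ∩ -recCone B

/-- dimension of (the affine hull of) a set. -/
def sdim {E : Type*} [AddCommGroup E] [Module ℝ E] (B : Set E) : ℕ :=
  Module.finrank ℝ (vectorSpan ℝ B)

def IsPolyhedron {d : ℕ} (B : Set (Fin d → ℝ)) : Prop :=
  ∃ (k : ℕ) (W : Matrix (Fin k) (Fin d) ℝ) (v : Fin k → ℝ), B = {x | v ≤ W.mulVec x}

/-- orthogonal complement (as a set) of a set of vectors. -/
def orthSet {d : ℕ} (L : Set (Fin d → ℝ)) : Set (Fin d → ℝ) :=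
  {y | ∀ z ∈ L, y ⬝ᵥ z = 0}

/-- polar cone `K° = {w : ∀ y ∈ K, wᵀy ≤ 0}`. -/
def polarCone {d : ℕ} (K : Set (Fin d → ℝ)) : Set (Fin d → ℝ) :=
  {w | ∀ y ∈ K, w ⬝ᵥ y ≤ 0}

/-- the last index of `Fin q` (1-based index `q`). -/
def lastIdx (q : ℕ) (hq : 0 < q) : Fin q := ⟨q - 1, by omega⟩

/-- `y ↦ (y,1)`. -/
def lift1 {q : ℕ} (y : Fin q → ℝ) : Fin (q + 1) → ℝ := Fin.snoc y 1

/-- `y ↦ (y,0)`. -/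
def lift0 {q : ℕ} (y : Fin q → ℝ) : Fin (q + 1) → ℝ := Fin.snoc y 0

/-- `p(y) = (y₁,…,y_q)`. -/
def projq {q : ℕ} (y : Fin (q + 1) → ℝ) : Fin q → ℝ := fun i => y i.castSucc

/-- `Φ(B) = cl cone (B × {1})`. -/
def PhiMap {q : ℕ} (B : Set (Fin q → ℝ)) : Set (Fin (q + 1) → ℝ) :=
  closure (coneOf (lift1 '' B))

/-- the block matrix `G = (A; −ZᵀP; 0)`. -/
def Gmat {m n q r : ℕ} (A : Matrix (Fin m) (Fin n) ℝ) (P : Matrix (Fin q) (Fin n) ℝ)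
    (Z : Matrix (Fin q) (Fin r) ℝ) : Matrix (Fin (m + r + 1)) (Fin n) ℝ :=
  fun i j =>
    if h : (i : ℕ) < m then A ⟨i, h⟩ j
    else if h2 : (i : ℕ) < m + r then -(∑ l : Fin q, Z l ⟨(i : ℕ) - m, by omega⟩ * P l j)
    else 0

/-- the block matrix `H` with rows `(0, −b)`, `(Zᵀ, 0)` and `(0,…,0,1)`. -/
def Hmat {m q r : ℕ} (b : Fin m → ℝ) (Z : Matrix (Fin q) (Fin r) ℝ) :
    Matrix (Fin (m + r + 1)) (Fin (q + 1)) ℝ :=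
  fun i j =>
    if h : (i : ℕ) < m then (if (j : ℕ) = q then -b ⟨i, h⟩ else 0)
    else if h2 : (i : ℕ) < m + r then
      (if hj : (j : ℕ) < q then Z ⟨j, hj⟩ ⟨(i : ℕ) - m, by omega⟩ else 0)
    else (if (j : ℕ) = q then 1 else 0)

/-- dual objective `D(u,w) = (w₁,…,w_{q−1}, bᵀu)`. -/
def Dmap {m q : ℕ} (b : Fin m → ℝ) (uw : (Fin m → ℝ) × (Fin q → ℝ)) : Fin q → ℝ :=
  fun i => if (i : ℕ) < q - 1 then uw.2 i else b ⬝ᵥ uw.1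

/-- `R* = {v : v₁ = ⋯ = v_{q−1} = 0, v_q ≥ 0}`. -/
def RstarSet (q : ℕ) (hq : 0 < q) : Set (Fin q → ℝ) :=
  {v | (∀ i : Fin q, (i : ℕ) < q - 1 → v i = 0) ∧ 0 ≤ v (lastIdx q hq)}

/-- dual feasible set `T`. -/
def Tset {m n q r : ℕ} (A : Matrix (Fin m) (Fin n) ℝ) (P : Matrix (Fin q) (Fin n) ℝ)
    (Z : Matrix (Fin q) (Fin r) ℝ) (cbar : Fin q → ℝ) :
    Set ((Fin m → ℝ) × (Fin q → ℝ)) :=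
  {uw | ∃ v : Fin r → ℝ, 0 ≤ v ∧ uw.2 = Z.mulVec v ∧
    Aᵀ.mulVec uw.1 = Pᵀ.mulVec uw.2 ∧ cbar ⬝ᵥ uw.2 = 1 ∧ 0 ≤ uw.1}

/-- `φ(y,w) = Σ_{i<q} y_i w_i + y_q (1 − Σ_{i<q} c̄_i w_i) − w_q`. -/
def phiFn {q : ℕ} (hq : 0 < q) (cbar : Fin q → ℝ) (y w : Fin q → ℝ) : ℝ :=
  (∑ i : Fin q, if (i : ℕ) < q - 1 then y i * w i else 0)
    + y (lastIdx q hq) * (1 - ∑ i : Fin q, if (i : ℕ) < q - 1 then cbar i * w i else 0)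
    - w (lastIdx q hq)

/-- duality map `Ψ(F*) = ⋂_{w ∈ F*} {y ∈ Pset : φ(y,w) = 0}`. -/
def PsiMap {q : ℕ} (hq : 0 < q) (cbar : Fin q → ℝ) (Pset : Set (Fin q → ℝ))
    (Fstar : Set (Fin q → ℝ)) : Set (Fin q → ℝ) :=
  ⋂ w ∈ Fstar, {y ∈ Pset | phiFn hq cbar y w = 0}

/-- `My = (−y₁,…,−y_{q−1}, c̄₁y₁+⋯+c̄_{q−1}y_{q−1} − y_{q+1}, y_q)`. -/
def Mmap {q : ℕ} (hq : 0 < q) (cbar : Fin q → ℝ) (y : Fin (q + 1) → ℝ) : Fin (q + 1) → ℝ :=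
  fun i =>
    if (i : ℕ) < q - 1 then -y i
    else if (i : ℕ) = q - 1 then
      (∑ j : Fin q, if (j : ℕ) < q - 1 then cbar j * y j.castSucc else 0) - y (Fin.last q)
    else y ((lastIdx q hq).castSucc)

/-- `M⁻¹w = (−w₁,…,−w_{q−1}, w_{q+1}, −cᵀw)` where `c = (c̄,0)`. -/
def MinvMap {q : ℕ} (cbar : Fin q → ℝ) (w : Fin (q + 1) → ℝ) : Fin (q + 1) → ℝ :=
  fun i =>
    if (i : ℕ) < q - 1 then -w i
    else if (i : ℕ) = q - 1 then w (Fin.last q)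
    else -((Fin.snoc cbar 0 : Fin (q + 1) → ℝ) ⬝ᵥ w)

/-- `p*(w) = (w₁,…,w_{q−1},w_{q+1})`. -/
def pstarMap {q : ℕ} (w : Fin (q + 1) → ℝ) : Fin q → ℝ :=
  fun i => if (i : ℕ) < q - 1 then w i.castSucc else w (Fin.last q)

/-- `y` generates an extreme ray of the pointed convex cone `Q`. -/
def IsExtremeDir {E : Type*} [AddCommGroup E] [Module ℝ E] (Q : Set E) (y : E) : Prop :=
  y ∈ Q ∧ y ≠ 0 ∧ IsFaceOf (coneOf {y}) Q

/-- `σ(u,w) = (u¹, −p(w))` where `u = (u¹,u²,u³) ∈ ℝ^m×ℝ^r×ℝ`. -/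
def sigmaMap {m q r : ℕ} (uw : (Fin (m + r + 1) → ℝ) × (Fin (q + 1) → ℝ)) :
    (Fin m → ℝ) × (Fin q → ℝ) :=
  (fun i => uw.1 (Fin.castLE (by omega) i), -projq uw.2)

section AuxLemmas
open Matrix Finset

/-- Carathéodory for cones: a nonneg combination can be rewritten using a
linearly independent subfamily. -/
lemma carath_cone {E : Type*} [AddCommGroup E] [Module ℝ E] {κ : Type*} [Fintype κ]
    (g : κ → E) :
    ∀ (c : ℕ) (t : κ → ℝ), 0 ≤ t → (Finset.univ.filter fun i => t i ≠ 0).card ≤ c →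
    ∃ (s : Finset κ) (t' : κ → ℝ), LinearIndependent ℝ (fun i : s => g i.1) ∧
      0 ≤ t' ∧ (∀ i, i ∉ s → t' i = 0) ∧ ∑ i, t' i • g i = ∑ i, t i • g i := by
  classical
  intro c
  induction c with
  | zero =>
    intro t ht hcard
    refine ⟨∅, t, ?_, ht, ?_, rfl⟩
    · have : IsEmpty ((∅ : Finset κ) : Type _) := by simp; exact ⟨fun x => x.2⟩
      exact linearIndependent_empty_type
    · intro i _
      by_contra hne
      have : i ∈ Finset.univ.filter fun i => t i ≠ 0 := by simp [hne]
      have := Finset.card_pos.2 ⟨i, this⟩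
      omega
  | succ c ih =>
    intro t ht hcard
    set s : Finset κ := Finset.univ.filter fun i => t i ≠ 0 with hs
    by_cases hli : LinearIndependent ℝ (fun i : s => g i.1)
    · exact ⟨s, t, hli, ht, fun i hi => by simpa [hs] using hi, rfl⟩
    · -- get dependence
      obtain ⟨cf, hcfsum, i₁, hi₁⟩ := Fintype.not_linearIndependent_iff.mp hli
      set cext : κ → ℝ := fun i => if h : i ∈ s then cf ⟨i, h⟩ else 0 with hcext
      have hcext_sum : ∑ i, cext i • g i = 0 := by
        rw [← Finset.sum_subset (Finset.subset_univ s)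
          (fun i _ hi => by simp [hcext, hi])]
        rw [← Finset.sum_coe_sort s (fun i => cext i • g i)]
        simpa [hcext] using hcfsum
      have hcext_supp : ∀ i, i ∉ s → cext i = 0 := fun i hi => by simp [hcext, hi]
      -- WLOG there's a positive coordinate
      obtain ⟨cc, hccsum, hccsupp, j₀, hj₀⟩ :
          ∃ cc : κ → ℝ, ∑ i, cc i • g i = 0 ∧ (∀ i, i ∉ s → cc i = 0) ∧ ∃ j, 0 < cc j := by
        rcases lt_trichotomy (cf i₁) 0 with hlt | heq | hgt
        · refine ⟨-cext, ?_, fun i hi => by simp [hcext_supp i hi], i₁, ?_⟩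
          · simp [neg_smul, Finset.sum_neg_distrib, hcext_sum]
          · have : cext (i₁ : κ) = cf i₁ := by simp [hcext]
            simp [this]; linarith
        · exact absurd heq hi₁
        · refine ⟨cext, hcext_sum, hcext_supp, i₁, ?_⟩
          have : cext (i₁ : κ) = cf i₁ := by simp [hcext]
          simp [this, hgt]
      -- choose the minimizing ratio
      set Pos : Finset κ := Finset.univ.filter fun i => 0 < cc i with hPos
      have hj₀' : j₀ ∈ Pos := by simp [hPos, hj₀]
      obtain ⟨i₀, hi₀mem, hi₀min⟩ :=
        Finset.exists_min_image Pos (fun i => t i / cc i) ⟨j₀, hj₀'⟩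
      have hcci₀ : 0 < cc i₀ := by simpa [hPos] using hi₀mem
      set τ : ℝ := t i₀ / cc i₀ with hτ
      have hτ0 : 0 ≤ τ := div_nonneg (ht i₀) hcci₀.le
      set t' : κ → ℝ := fun i => t i - τ * cc i with ht'
      have ht'0 : 0 ≤ t' := by
        intro i
        rcases le_or_gt (cc i) 0 with hcc | hcc
        · have : τ * cc i ≤ 0 := mul_nonpos_of_nonneg_of_nonpos hτ0 hcc
          have := ht i
          simp only [ht', Pi.zero_apply] at *
          linarith
        · have hiP : i ∈ Pos := by simp [hPos, hcc]
          have := hi₀min i hiP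
          have : τ * cc i ≤ t i := by
            rw [hτ]
            calc t i₀ / cc i₀ * cc i ≤ t i / cc i * cc i := by
                  apply mul_le_mul_of_nonneg_right (hi₀min i hiP) hcc.le
              _ = t i := div_mul_cancel₀ _ hcc.ne'
          simp only [ht', Pi.zero_apply]
          linarith
      have ht'i₀ : t' i₀ = 0 := by
        simp [ht', hτ, div_mul_cancel₀ _ hcci₀.ne']
      have hsum' : ∑ i, t' i • g i = ∑ i, t i • g i := by
        have hz : ∑ x, (τ * cc x) • g x = (0 : E) := by
          calc ∑ x, (τ * cc x) • g x = τ • ∑ x, cc x • g x := by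
                rw [Finset.smul_sum]; simp_rw [smul_smul]
            _ = 0 := by rw [hccsum, smul_zero]
        simp only [ht', sub_smul, Finset.sum_sub_distrib, hz, sub_zero]
      -- support decreased
      have hsupp' : (Finset.univ.filter fun i => t' i ≠ 0) ⊆ s.erase i₀ := by
        intro i hi
        simp only [Finset.mem_filter, Finset.mem_univ, true_and] at hi
        rw [Finset.mem_erase]
        constructor
        · rintro rfl; exact hi ht'i₀
        · by_contra hns
          exact hi (by simp [ht', hccsupp i hns, (by simpa [hs] using hns : t i = 0)])
      have hi₀s : i₀ ∈ s := by
        by_contra h; exact hcci₀.ne' (hccsupp i₀ h)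
      have hcard' : (Finset.univ.filter fun i => t' i ≠ 0).card ≤ c := by
        have h1 := Finset.card_le_card hsupp'
        have h2 : (s.erase i₀).card < s.card := Finset.card_erase_lt_of_mem hi₀s
        omega
      obtain ⟨s₂, t₂, hli₂, ht₂0, ht₂supp, hsum₂⟩ := ih t' ht'0 hcard'
      exact ⟨s₂, t₂, hli₂, ht₂0, ht₂supp, hsum₂.trans hsum'⟩

/-- A finitely generated cone in a finite-dimensional normed space is closed. -/
lemma fgCone_isClosed {E : Type*} [NormedAddCommGroup E] [NormedSpace ℝ E]
    [FiniteDimensional ℝ E] {κ : Type*} [Fintype κ] (g : κ → E) :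
    IsClosed {x : E | ∃ t : κ → ℝ, 0 ≤ t ∧ x = ∑ i, t i • g i} := by
  classical
  have hpieces : {x : E | ∃ t : κ → ℝ, 0 ≤ t ∧ x = ∑ i, t i • g i} =
      ⋃ s ∈ {s : Finset κ | LinearIndependent ℝ (fun i : s => g i.1)},
        {x : E | ∃ t : {i // i ∈ s} → ℝ, (∀ i, 0 ≤ t i) ∧ x = ∑ i, t i • g i.1} := by
    ext x
    simp only [Set.mem_iUnion, Set.mem_setOf_eq]
    constructor
    · rintro ⟨t, ht, rfl⟩
      obtain ⟨s, t', hli, ht'0, ht'supp, hsum⟩ :=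
        carath_cone g ((Finset.univ.filter fun i => t i ≠ 0).card) t ht le_rfl
      refine ⟨s, hli, fun i => t' i, fun i => ht'0 i, ?_⟩
      rw [← hsum, Finset.univ_eq_attach, Finset.sum_attach s (fun i => t' i • g i)]
      exact (Finset.sum_subset (Finset.subset_univ s)
        (fun i _ hi => by rw [ht'supp i hi, zero_smul])).symm
    · rintro ⟨s, hli, t, ht, rfl⟩
      refine ⟨fun i => if h : i ∈ s then t ⟨i, h⟩ else 0,
        fun i => by dsimp; split <;> simp [ht _], ?_⟩
      calc ∑ i : {i // i ∈ s}, t i • g i.1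
          = ∑ i ∈ s.attach,
              (fun j => (if h : j ∈ s then t ⟨j, h⟩ else 0) • g j) i.1 := by
            rw [Finset.univ_eq_attach]
            exact Finset.sum_congr rfl (fun i _ => by simp [i.2])
        _ = ∑ i ∈ s, (if h : i ∈ s then t ⟨i, h⟩ else 0) • g i :=
            Finset.sum_attach s (fun j => (if h : j ∈ s then t ⟨j, h⟩ else 0) • g j)
        _ = ∑ i : κ, (fun i => if h : i ∈ s then t ⟨i, h⟩ else 0) i • g i :=
            Finset.sum_subset (Finset.subset_univ s) (fun i _ hi => by simp [hi])
  rw [hpieces]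
  refine (Set.Finite.isClosed_biUnion (Set.toFinite _) ?_)
  intro s hs
  -- image of the nonneg orthant under an injective linear map
  set L : ({i // i ∈ s} → ℝ) →ₗ[ℝ] E :=
    { toFun := fun t => ∑ i, t i • g i.1
      map_add' := by intros; simp [add_smul, Finset.sum_add_distrib]
      map_smul' := by intros; simp [smul_smul, Finset.smul_sum] } with hL
  have hker : LinearMap.ker L = ⊥ := by
    rw [LinearMap.ker_eq_bot']
    intro v hv
    exact funext (Fintype.linearIndependent_iff.mp hs v hv)
  have hemb := LinearMap.isClosedEmbedding_of_injective (f := L) hker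
  have horth : IsClosed {t : {i // i ∈ s} → ℝ | ∀ i, 0 ≤ t i} := by
    have : {t : {i // i ∈ s} → ℝ | ∀ i, 0 ≤ t i} = ⋂ i, {t | 0 ≤ t i} :=
      by ext; simp [Set.mem_iInter]
    rw [this]
    exact isClosed_iInter fun i => isClosed_le continuous_const (continuous_apply i)
  have himg := hemb.isClosedMap _ horth
  convert himg using 1
  ext x
  simp only [Set.mem_setOf_eq, Set.mem_image]
  constructor
  · rintro ⟨t, ht, rfl⟩; exact ⟨t, ht, rfl⟩
  · rintro ⟨t, ht, rfl⟩; exact ⟨t, ht, rfl⟩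

open RealInnerProductSpace in
/-- Separation of a point from a finitely generated cone. -/
lemma cone_separation {ι κ : Type*} [Fintype ι] [Fintype κ]
    (g : κ → (ι → ℝ)) (d : ι → ℝ)
    (hd : ∀ t : κ → ℝ, 0 ≤ t → d ≠ ∑ i, t i • g i) :
    ∃ a : ι → ℝ, (∀ i, a ⬝ᵥ g i ≤ 0) ∧ 0 < a ⬝ᵥ d := by
  classical
  set g' : κ → EuclideanSpace ℝ ι := fun i => WithLp.toLp 2 (g i) with hg'
  set S : Set (EuclideanSpace ℝ ι) :=
    {x : EuclideanSpace ℝ ι | ∃ t : κ → ℝ, 0 ≤ t ∧ x = ∑ i, t i • g' i} with hS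
  have hSconvex : ∀ x ∈ S, ∀ y ∈ S, x + y ∈ S := by
    rintro x ⟨t, ht, rfl⟩ y ⟨u, hu, rfl⟩
    exact ⟨t + u, add_nonneg ht hu, by simp [add_smul, Finset.sum_add_distrib]⟩
  have hSsmul : ∀ (c : ℝ), 0 < c → ∀ x ∈ S, c • x ∈ S := by
    rintro c hc x ⟨t, ht, rfl⟩
    exact ⟨c • t, smul_nonneg hc.le ht, by
      rw [Finset.smul_sum]; exact Finset.sum_congr rfl fun i _ => by
        simp [smul_smul]⟩
  set Q : ConvexCone ℝ (EuclideanSpace ℝ ι) :=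
    { carrier := S
      smul_mem' := fun c hc x hx => hSsmul c hc x hx
      add_mem' := fun x hx y hy => hSconvex x hx y hy } with hQ
  have hQne : (Q : Set (EuclideanSpace ℝ ι)).Nonempty := ⟨0, ⟨0, le_rfl, by simp⟩⟩
  have hQclosed : IsClosed (Q : Set (EuclideanSpace ℝ ι)) := fgCone_isClosed g'
  set PC : ProperCone ℝ (EuclideanSpace ℝ ι) :=
    { carrier := S
      add_mem' := fun hx hy => hSconvex _ hx _ hy
      zero_mem' := ⟨0, le_rfl, by simp⟩
      smul_mem' := by
        rintro c x ⟨t, ht, rfl⟩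
        exact ⟨(c : ℝ) • t, smul_nonneg c.2 ht, by
          rw [Finset.smul_sum]
          exact Finset.sum_congr rfl fun i _ => by
            change (c : ℝ) • t i • g' i = ((c : ℝ) * t i) • g' i
            rw [smul_smul]⟩
      isClosed' := hQclosed } with hPC
  have hdne : (WithLp.toLp 2 d : EuclideanSpace ℝ ι) ∉ PC := by
    rintro ⟨t, ht, hteq⟩
    exact hd t ht (by simpa [hg'] using congrArg WithLp.ofLp hteq)
  obtain ⟨y, hy1, hy2⟩ := PC.hyperplane_separation' hdne
  have hinner : ∀ u v : EuclideanSpace ℝ ι, ⟪u, v⟫ = (u.ofLp : ι → ℝ) ⬝ᵥ v.ofLp := by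
    intro u v
    simp [PiLp.inner_apply, dotProduct, RCLike.inner_apply, mul_comm]
  refine ⟨-y.ofLp, fun i => ?_, ?_⟩
  · have hmem : g' i ∈ Q := ⟨Pi.single i 1, by
      intro j; by_cases h : j = i <;> simp [Pi.single_apply, h], by
      rw [Finset.sum_eq_single i (fun j _ hj => by simp [Pi.single_apply, hj])
        (fun h => absurd (Finset.mem_univ i) h)]
      simp⟩
    have h1 : (0:ℝ) ≤ (g i : ι → ℝ) ⬝ᵥ y.ofLp := by
        have := hy1 _ hmem; rw [hinner] at this; simpa [hg'] using this
    rw [dotProduct_comm] at h1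
    rw [neg_dotProduct]
    linarith
  · have h2 : (y.ofLp : ι → ℝ) ⬝ᵥ d < 0 := by
      have := hy2; rw [hinner, dotProduct_comm] at this; simpa using this
    rw [neg_dotProduct]
    linarith

lemma dot_sumElim {ι κ : Type*} [Fintype ι] [Fintype κ] (a c : ι → ℝ) (b d : κ → ℝ) :
    (Sum.elim a b) ⬝ᵥ (Sum.elim c d) = a ⬝ᵥ c + b ⬝ᵥ d := by
  simp [dotProduct, Fintype.sum_sum_type]

lemma sum_dotProduct' {ι κ : Type*} [Fintype ι] [Fintype κ] (f : κ → ι → ℝ) (v : ι → ℝ) :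
    (∑ i, f i) ⬝ᵥ v = ∑ i, f i ⬝ᵥ v := by
  simp only [dotProduct, Finset.sum_apply, Finset.sum_mul]
  exact Finset.sum_comm

end AuxLemmas

/-- A nonempty face `F*` of `K* = K°` is `(M(R*×{0}))`-maximal iff some
`y ∈ Γ⁻¹(F*)` satisfies `(c*)ᵀy < 0`. -/
theorem stmt15
    (m n q r : ℕ) (hm : 0 < m) (hn : 0 < n) (hq : 0 < q) (hr : 0 < r)
    (A : Matrix (Fin m) (Fin n) ℝ) (P : Matrix (Fin q) (Fin n) ℝ)
    (Z : Matrix (Fin q) (Fin r) ℝ) (b : Fin m → ℝ)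
    (C : Set (Fin q → ℝ)) (hC : C = {y | 0 ≤ Zᵀ.mulVec y})
    (hCpointed : C ∩ -C = {0}) (hCnontriv : C ≠ {0})
    (S : Set (Fin n → ℝ)) (hS : S = {x | b ≤ A.mulVec x}) (hSne : S.Nonempty)
    (cbar : Fin q → ℝ) (hcbar : cbar ∈ intrinsicInterior ℝ C)
    (hcq : cbar (lastIdx q hq) = 1)
    (cstar : Fin (q + 1) → ℝ) (hcstar : cstar = fun i => if i = Fin.last q then -1 else 0)
    (K : Set (Fin (q + 1) → ℝ))
    (hK : K = {y | ∃ x : Fin n → ℝ, 0 ≤ (Gmat A P Z).mulVec x + (Hmat b Z).mulVec y})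
    (Fstar : Set (Fin (q + 1) → ℝ)) (hFs : IsFaceOf Fstar (polarCone K))
    (hFsne : Fstar.Nonempty) :
    (∀ w ∈ Fstar, ∀ ε : ℝ, 0 < ε → w - ε • cstar ∉ polarCone K) ↔
      ∃ y ∈ ⋂ w ∈ Fstar, {y ∈ K | y ⬝ᵥ w = 0}, cstar ⬝ᵥ y < 0 := by
  classical
  set G := Gmat A P Z with hG
  set H := Hmat b Z with hH
  -- the rows of the block matrix (H | G), as vectors indexed by a sum type
  set g : Fin (m + r + 1) → ((Fin (q + 1) ⊕ Fin n) → ℝ) :=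
    fun i => Sum.elim (fun j => H i j) (fun j => G i j) with hg
  have hgy : ∀ (i : Fin (m + r + 1)) (y : Fin (q + 1) → ℝ) (x : Fin n → ℝ),
      g i ⬝ᵥ Sum.elim y x = (H.mulVec y + G.mulVec x) i := by
    intro i y x
    rw [hg, dot_sumElim]
    rfl
  have hKmem : ∀ y : Fin (q + 1) → ℝ, y ∈ K ↔
      ∃ x : Fin n → ℝ, 0 ≤ G.mulVec x + H.mulVec y := by
    intro y; rw [hK]; rfl
  -- if a is nonpositive against all rows then its (negated) first block is in K
  have hrowK : ∀ a : (Fin (q + 1) ⊕ Fin n) → ℝ, (∀ i, a ⬝ᵥ g i ≤ 0) →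
      (fun j => -a (Sum.inl j)) ∈ K := by
    intro a ha
    rw [hKmem]
    refine ⟨fun j => -a (Sum.inr j), ?_⟩
    intro i
    have h1 := ha i
    rw [dotProduct_comm] at h1
    have h2 : a = Sum.elim (fun j => a (Sum.inl j)) (fun j => a (Sum.inr j)) := by
      funext o; cases o <;> rfl
    rw [h2] at h1
    rw [hgy i _ _] at h1
    have h3 : (fun j => -a (Sum.inl j)) = -(fun j => a (Sum.inl j)) := rfl
    have h4 : (fun j => -a (Sum.inr j)) = -(fun j => a (Sum.inr j)) := rfl
    simp only [Pi.zero_apply, Pi.add_apply, h3, h4, Matrix.mulVec_neg, Pi.neg_apply]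
    simp only [Pi.add_apply] at h1
    linarith
  -- Farkas: every element of the polar cone is a nonneg combination of the rows
  have hFarkas : ∀ w ∈ polarCone K, ∃ u : Fin (m + r + 1) → ℝ, 0 ≤ u ∧
      Sum.elim (-w) 0 = ∑ i, u i • g i := by
    intro w hw
    by_contra hcon
    push_neg at hcon
    obtain ⟨a, ha1, ha2⟩ := cone_separation g (Sum.elim (-w) 0) fun t ht => hcon t ht
    have hyK := hrowK a ha1
    have hwy := hw _ hyK
    have h2 : a = Sum.elim (fun j => a (Sum.inl j)) (fun j => a (Sum.inr j)) := by
      funext o; cases o <;> rfl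
    rw [h2, dot_sumElim] at ha2
    have h5 : (fun j : Fin n => a (Sum.inr j)) ⬝ᵥ (0 : Fin n → ℝ) = 0 :=
      dotProduct_zero _
    rw [h5, add_zero] at ha2
    have h6 : (fun j => a (Sum.inl j)) ⬝ᵥ (-w) = -((fun j => a (Sum.inl j)) ⬝ᵥ w) :=
      dotProduct_neg _ _
    rw [h6] at ha2
    have h7 : w ⬝ᵥ (fun j => -a (Sum.inl j)) = -(w ⬝ᵥ fun j => a (Sum.inl j)) := by
      have : (fun j => -a (Sum.inl j)) = -(fun j => a (Sum.inl j)) := rfl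
      rw [this, dotProduct_neg]
    rw [h7] at hwy
    rw [dotProduct_comm] at hwy
    linarith
  constructor
  · -- forward direction
    intro hmax
    -- a relative interior point of Fstar
    obtain ⟨w₀, hw₀⟩ := hFsne.intrinsicInterior hFs.1
    have hw₀F : w₀ ∈ Fstar := intrinsicInterior_subset hw₀
    have hw₀K : w₀ ∈ polarCone K := hFs.2.1 hw₀F
    obtain ⟨u₀, hu₀0, hu₀⟩ := hFarkas w₀ hw₀K
    -- extend the generators by the ray through (w₀, 0)
    set gg : Option (Fin (m + r + 1)) → ((Fin (q + 1) ⊕ Fin n) → ℝ) :=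
      fun o => match o with
        | none => Sum.elim w₀ 0
        | some i => g i with hgg
    have hd : ∀ t : Option (Fin (m + r + 1)) → ℝ, 0 ≤ t →
        Sum.elim cstar 0 ≠ ∑ o, t o • gg o := by
      intro t ht heq
      set s : ℝ := t none with hs
      set t' : Fin (m + r + 1) → ℝ := fun i => t (some i) with ht'
      have hsum : Sum.elim cstar (0 : Fin n → ℝ) = s • Sum.elim w₀ 0 + ∑ i, t' i • g i := by
        rw [heq, Fintype.sum_option]
      have hs0 : 0 ≤ s := ht none
      set ε : ℝ := 1 / (s + 1) with hε'
      have hεpos : 0 < ε := by positivity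
      have hε1 : ε * (s + 1) = 1 := by
        rw [hε']; field_simp
      have hsum' : ∑ i, t' i • g i
          = Sum.elim cstar (0 : Fin n → ℝ) - s • Sum.elim w₀ 0 := by
        rw [hsum]; abel
      have hpol : w₀ - ε • cstar ∈ polarCone K := by
        intro y hyK
        obtain ⟨x, hx⟩ := (hKmem y).mp hyK
        have hval0 : 0 ≤ ∑ i, (ε * (u₀ i + t' i)) * ((G.mulVec x + H.mulVec y) i) :=
          Finset.sum_nonneg fun i _ => mul_nonneg
            (mul_nonneg hεpos.le (add_nonneg (hu₀0 i) (ht (some i)))) (hx i)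
        have hval_eq : ∑ i, (ε * (u₀ i + t' i)) * ((G.mulVec x + H.mulVec y) i)
            = -(w₀ ⬝ᵥ y) + ε * (cstar ⬝ᵥ y) := by
          have e1 : ∀ i, (G.mulVec x + H.mulVec y) i = g i ⬝ᵥ Sum.elim y x := by
            intro i
            rw [hgy i y x]
            simp only [Pi.add_apply]
            ring
          calc ∑ i, (ε * (u₀ i + t' i)) * ((G.mulVec x + H.mulVec y) i)
              = ∑ i, ((ε * (u₀ i + t' i)) • g i) ⬝ᵥ Sum.elim y x := by
                refine Finset.sum_congr rfl fun i _ => ?_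
                rw [e1 i, smul_dotProduct, smul_eq_mul]
            _ = (∑ i, (ε * (u₀ i + t' i)) • g i) ⬝ᵥ Sum.elim y x := by
                rw [sum_dotProduct']
            _ = (ε • (∑ i, u₀ i • g i) + ε • (∑ i, t' i • g i)) ⬝ᵥ Sum.elim y x := by
                congr 1
                rw [Finset.smul_sum, Finset.smul_sum, ← Finset.sum_add_distrib]
                refine Finset.sum_congr rfl fun i _ => ?_
                rw [smul_smul, smul_smul, ← add_smul, ← mul_add]
            _ = -(w₀ ⬝ᵥ y) + ε * (cstar ⬝ᵥ y) := by
                rw [← hu₀, hsum']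
                rw [add_dotProduct, smul_dotProduct, smul_dotProduct,
                  sub_dotProduct, smul_dotProduct]
                rw [dot_sumElim, dot_sumElim, dot_sumElim]
                simp only [neg_dotProduct, zero_dotProduct, add_zero,
                  smul_eq_mul]
                linear_combination (-(w₀ ⬝ᵥ y)) * hε1
        have : (w₀ - ε • cstar) ⬝ᵥ y = w₀ ⬝ᵥ y - ε * (cstar ⬝ᵥ y) := by
          rw [sub_dotProduct, smul_dotProduct, smul_eq_mul]
        rw [this]
        linarith [hval0, hval_eq.symm.le, hval_eq.le]
      exact hmax w₀ hw₀F ε hεpos hpol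
    obtain ⟨a, ha1, ha2⟩ := cone_separation gg (Sum.elim cstar 0) hd
    set y₁ : Fin (q + 1) → ℝ := fun j => -a (Sum.inl j) with hy₁
    have hy₁K : y₁ ∈ K := hrowK a fun i => ha1 (some i)
    have hsplit : a = Sum.elim (fun j => a (Sum.inl j)) (fun j => a (Sum.inr j)) := by
      funext o; cases o <;> rfl
    -- y₁ ⬝ᵥ w₀ = 0
    have haw₀ : (fun j => a (Sum.inl j)) ⬝ᵥ w₀ ≤ 0 := by
      have h := ha1 none
      rw [dotProduct_comm, hsplit, dot_sumElim] at h
      rw [dotProduct_comm]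
      simpa using h
    have hy₁w₀ : y₁ ⬝ᵥ w₀ = 0 := by
      have h1 : y₁ ⬝ᵥ w₀ = -((fun j => a (Sum.inl j)) ⬝ᵥ w₀) := by
        rw [hy₁]
        rw [show (fun j => -a (Sum.inl j)) = -(fun j => a (Sum.inl j)) from rfl,
          neg_dotProduct]
      have h2 : w₀ ⬝ᵥ y₁ ≤ 0 := hw₀K y₁ hy₁K
      rw [dotProduct_comm] at h2
      rw [h1] at h2 ⊢
      linarith [haw₀]
    -- cstar ⬝ᵥ y₁ < 0
    have hcy₁ : cstar ⬝ᵥ y₁ < 0 := by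
      rw [hsplit, dotProduct_comm, dot_sumElim] at ha2
      simp only [zero_dotProduct, dotProduct_zero, add_zero] at ha2
      have : cstar ⬝ᵥ y₁ = -(cstar ⬝ᵥ fun j => a (Sum.inl j)) := by
        rw [hy₁, show (fun j => -a (Sum.inl j)) = -(fun j => a (Sum.inl j)) from rfl,
          dotProduct_neg]
      rw [this]
      linarith [ha2]
    -- orthogonality to all of Fstar via the relative interior point
    have hAll : ∀ w ∈ Fstar, y₁ ⬝ᵥ w = 0 := by
      intro w hwF
      obtain ⟨p, hpint, hpcoe⟩ := mem_intrinsicInterior.mp hw₀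
      have hw₀span : w₀ ∈ affineSpan ℝ Fstar := subset_affineSpan ℝ _ hw₀F
      have hwspan : w ∈ affineSpan ℝ Fstar := subset_affineSpan ℝ _ hwF
      have hmem : ∀ τ : ℝ, τ • (w₀ - w) + w ∈ affineSpan ℝ Fstar := by
        intro τ
        have := AffineSubspace.smul_vsub_vadd_mem (affineSpan ℝ Fstar) τ
          hw₀span hwspan hwspan
        simpa [vsub_eq_sub, vadd_eq_add] using this
      set f : ℝ → affineSpan ℝ Fstar := fun τ => ⟨τ • (w₀ - w) + w, hmem τ⟩ with hf
      have hfc : Continuous f := by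
        apply Continuous.subtype_mk
        exact (continuous_id.smul continuous_const).add continuous_const
      have hf1 : f 1 = p := by
        apply Subtype.ext
        rw [hpcoe]
        show (1 : ℝ) • (w₀ - w) + w = w₀
        rw [one_smul, sub_add_cancel]
      have hopen : IsOpen (f ⁻¹' interior ((↑) ⁻¹' Fstar : Set (affineSpan ℝ Fstar))) :=
        isOpen_interior.preimage hfc
      have h1mem : (1 : ℝ) ∈ f ⁻¹' interior ((↑) ⁻¹' Fstar : Set (affineSpan ℝ Fstar)) := by
        rw [Set.mem_preimage, hf1]; exact hpint
      obtain ⟨δ, hδ, hball⟩ := Metric.isOpen_iff.mp hopen 1 h1mem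
      set τ₁ : ℝ := 1 + δ / 2 with hτ₁def
      have hτ₁ball : τ₁ ∈ Metric.ball (1 : ℝ) δ := by
        rw [Metric.mem_ball, Real.dist_eq, hτ₁def]
        rw [show (1 : ℝ) + δ / 2 - 1 = δ / 2 by ring, abs_of_pos (by linarith)]
        linarith
      have hw' : τ₁ • (w₀ - w) + w ∈ Fstar := by
        have h3 := interior_subset (Set.mem_preimage.mp (hball hτ₁ball))
        exact h3
      -- dot products
      have hwle : y₁ ⬝ᵥ w ≤ 0 := by
        have := hFs.2.1 hwF y₁ hy₁K
        rwa [dotProduct_comm] at this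
      have hw'le : y₁ ⬝ᵥ (τ₁ • (w₀ - w) + w) ≤ 0 := by
        have := hFs.2.1 hw' y₁ hy₁K
        rwa [dotProduct_comm] at this
      have hexp : y₁ ⬝ᵥ (τ₁ • (w₀ - w) + w)
          = τ₁ * (y₁ ⬝ᵥ w₀ - y₁ ⬝ᵥ w) + y₁ ⬝ᵥ w := by
        rw [dotProduct_add, dotProduct_smul, smul_eq_mul,
          dotProduct_sub]
      rw [hexp, hy₁w₀, hτ₁def] at hw'le
      ring_nf at hw'le
      rcases lt_or_eq_of_le hwle with hlt | heq
      · exfalso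
        nlinarith [mul_pos hδ (neg_pos.mpr hlt), hw'le]
      · exact heq
    exact ⟨y₁, Set.mem_iInter₂.mpr fun w hw => ⟨hy₁K, hAll w hw⟩, hcy₁⟩
  · -- backward direction
    rintro ⟨y, hy, hylt⟩ w hw ε hε hcon
    have hyK : y ∈ K := (Set.mem_iInter₂.mp hy w hw).1
    have h2 : y ⬝ᵥ w = 0 := (Set.mem_iInter₂.mp hy w hw).2
    have h1 : (w - ε • cstar) ⬝ᵥ y ≤ 0 := hcon y hyK
    rw [sub_dotProduct, smul_dotProduct, dotProduct_comm w y, h2] at h1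
    have : ε • (cstar ⬝ᵥ y) = ε * (cstar ⬝ᵥ y) := rfl
    rw [this] at h1
    nlinarith
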